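/- Fix θ > 0 and λ₀ > 0, and let h : [0,∞) → ℝ be a continuous function (in the model, h(t) = α_t ∫ (z')^{βθ} dG_{d,t}(z') is the arrival rate of ideas weighted by the source distribution of insights). Suppose F : [0,∞) × (0,∞) → ℝ is strictly positive, for each z > 0 the map t ↦ F(t,z) is differentiable with ∂/∂t log F(t,z) = − h(t) · z^{−θ} for all t ≥ 0, and F(0,z) = exp(−λ₀ z^{−θ}) for all z > 0. Then for every t ≥ 0 and z > 0 one has F(t,z) = exp(−λ(t) z^{−θ}), where λ(t) = λ₀ + ∫₀^t h(τ) dτ; that is, F(t,·) is a Fréchet cumulative distribution function with shape parameter θ and location parameter λ(t) for every t. -/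

import Mathlib

/-- **Generic Law of Motion (Fréchet frontier stays Fréchet).**
If `F t z` is strictly positive, the log-derivative in time equals `-h t * z ^ (-θ)`,
and initially `F 0 z = exp (-λ₀ * z ^ (-θ))`, then for all `t ≥ 0`, `z > 0`,
`F t z = exp (-(λ₀ + ∫₀ᵗ h) * z ^ (-θ))`, i.e. `F t ·` is a Fréchet cdf with
shape `θ` and location `λ₀ + ∫₀ᵗ h`. -/
theorem frechet_law_of_motion (θ lam0 : ℝ) (hθ : 0 < θ) (hlam0 : 0 < lam0)
    (h : ℝ → ℝ) (hcont : ContinuousOn h (Set.Ici (0 : ℝ)))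
    (F : ℝ → ℝ → ℝ)
    (hFpos : ∀ t ≥ (0 : ℝ), ∀ z > (0 : ℝ), 0 < F t z)
    (hderiv : ∀ z > (0 : ℝ), ∀ t ≥ (0 : ℝ),
      HasDerivAt (fun s => Real.log (F s z)) (-(h t) * z ^ (-θ)) t)
    (hF0 : ∀ z > (0 : ℝ), F 0 z = Real.exp (-lam0 * z ^ (-θ))) :
    ∀ t ≥ (0 : ℝ), ∀ z > (0 : ℝ),
      F t z = Real.exp (-(lam0 + ∫ τ in (0 : ℝ)..t, h τ) * z ^ (-θ)) := by
  intro t ht z hz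
  -- It suffices to show the logs agree.
  have key : Real.log (F t z) = -(lam0 + ∫ τ in (0 : ℝ)..t, h τ) * z ^ (-θ) := by
    set f : ℝ → ℝ := fun s => Real.log (F s z) with hf
    set g : ℝ → ℝ := fun s => -(lam0 + ∫ τ in (0 : ℝ)..s, h τ) * z ^ (-θ) with hg
    have hint : ∀ x ∈ Set.Icc (0 : ℝ) t, IntervalIntegrable h MeasureTheory.volume 0 x := by
      intro x hx
      apply ContinuousOn.intervalIntegrable
      apply hcont.mono
      rw [Set.uIcc_of_le hx.1]
      exact fun y hy => hy.1
    have hgderiv : ∀ x ∈ Set.Icc (0 : ℝ) t,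
        HasDerivWithinAt g (-(h x) * z ^ (-θ)) (Set.Ici x) x := by
      intro x hx
      have hI : HasDerivWithinAt (fun u => ∫ τ in (0 : ℝ)..u, h τ) (h x) (Set.Ici x) x := by
        apply intervalIntegral.integral_hasDerivWithinAt_right (hint x hx)
          (t := Set.Ioi x)
        · exact ⟨Set.Ici x, nhdsWithin_mono x Set.Ioi_subset_Ici_self self_mem_nhdsWithin,
            (hcont.mono (Set.Ici_subset_Ici.2 hx.1)).aestronglyMeasurable measurableSet_Ici⟩
        · exact (hcont x hx.1).mono ((Set.Ioi_subset_Ici_self).trans (Set.Ici_subset_Ici.2 hx.1))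
      have := (((hasDerivWithinAt_const x (Set.Ici x) lam0).add hI).neg).mul_const (z ^ (-θ))
      refine this.congr_deriv ?_
      ring
    have hfderiv : ∀ x ∈ Set.Icc (0 : ℝ) t,
        HasDerivWithinAt f (-(h x) * z ^ (-θ)) (Set.Ici x) x :=
      fun x hx => (hderiv z hz x hx.1).hasDerivWithinAt
    have hfcont : ContinuousOn f (Set.Icc 0 t) :=
      fun x hx => ((hderiv z hz x hx.1).continuousAt).continuousWithinAt
    have hgcont : ContinuousOn g (Set.Icc 0 t) := by
      have : ContinuousOn (fun u => ∫ τ in (0:ℝ)..u, h τ) (Set.Icc 0 t) := by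
        have := intervalIntegral.continuousOn_primitive_interval'
          (μ := MeasureTheory.volume) (f := h) (b₁ := (0:ℝ)) (b₂ := t)
          (hint t (Set.right_mem_Icc.2 ht)) Set.left_mem_uIcc
        rwa [Set.uIcc_of_le ht] at this
      exact ((continuousOn_const.add this).neg).mul continuousOn_const
    have h0 : f 0 = g 0 := by
      simp [hf, hg, hF0 z hz]
    have := eq_of_has_deriv_right_eq
      (fun x hx => hfderiv x (Set.mem_Icc_of_Ico hx))
      (fun x hx => hgderiv x (Set.mem_Icc_of_Ico hx)) hfcont hgcont h0
    exact this t (Set.right_mem_Icc.2 ht)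
  have := congrArg Real.exp key
  rwa [Real.exp_log (hFpos t ht z hz)] at this
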